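/- Let α : Z → C be in ℓ^2 and suppose its discrete Fourier transform α̂ is supported (mod 2π) in {θ : |θ| ≤ κh} ∪ {θ : |θ - π| ≤ κh} with κh ≤ π/4. Then the shifted difference satisfies ‖α_{·+1} - α_{·-1}‖_{ℓ^2} ≤ 2 κh ‖α‖_{ℓ^2}. -/

import Mathlib

open Real MeasureTheory AddCircle

noncomputable section

instance fact2pi : Fact (0 < 2 * π) := ⟨Real.two_pi_pos⟩

lemma norm_fourier_apply (n : ℤ) (x : AddCircle (2 * π)) : ‖fourier n x‖ = 1 :=
  Circle.norm_coe _

lemma integral_fourier_eq (k : ℤ) :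
    (∫ t : AddCircle (2 * π), fourier k t ∂haarAddCircle) = if k = 0 then 1 else 0 := by
  split_ifs with hk
  · subst hk
    have : (fun t : AddCircle (2 * π) => fourier 0 t) = fun _ => (1 : ℂ) :=
      funext fun _ => fourier_zero
    rw [this, integral_const, probReal_univ, one_smul]
  · exact integral_eq_zero_of_add_right_eq_neg
      (fourier_add_half_inv_index hk Real.two_pi_pos)

lemma contF (α : ℤ → ℂ) (hl1 : Summable fun n : ℤ => ‖α n‖) :
    Continuous (fun x : AddCircle (2 * π) => ∑' n : ℤ, α n * fourier (-n) x) := by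
  apply continuous_tsum (fun n => continuous_const.mul (fourier (-n)).continuous) hl1
  intro n x
  show ‖α n * fourier (-n) x‖ ≤ ‖α n‖
  rw [norm_mul, norm_fourier_apply, mul_one]

lemma summable_term (α : ℤ → ℂ) (hl1 : Summable fun n : ℤ => ‖α n‖)
    (x : AddCircle (2 * π)) : Summable fun n : ℤ => α n * fourier (-n) x := by
  apply Summable.of_norm
  apply hl1.congr
  intro n
  rw [norm_mul, norm_fourier_apply, mul_one]

lemma coeffF (α : ℤ → ℂ) (hl1 : Summable fun n : ℤ => ‖α n‖) (m : ℤ) :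
    fourierCoeff (fun x : AddCircle (2 * π) => ∑' n : ℤ, α n * fourier (-n) x) m
      = α (-m) := by
  have hrw : ∀ t : AddCircle (2 * π),
      fourier (-m) t • (∑' n : ℤ, α n * fourier (-n) t)
        = ∑' n : ℤ, (fourier (-m) t * (α n * fourier (-n) t)) := by
    intro t
    rw [smul_eq_mul, tsum_mul_left]
  rw [fourierCoeff]
  simp_rw [hrw]
  rw [integral_tsum]
  · have hterm : ∀ n : ℤ,
        (∫ t : AddCircle (2 * π), fourier (-m) t * (α n * fourier (-n) t) ∂haarAddCircle)
          = α n * (if -m + -n = 0 then 1 else 0) := by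
      intro n
      have : ∀ t : AddCircle (2 * π),
          fourier (-m) t * (α n * fourier (-n) t) = α n * fourier (-m + -n) t := by
        intro t
        rw [fourier_add]; ring
      simp_rw [this]
      rw [integral_const_mul, integral_fourier_eq]
    simp_rw [hterm]
    rw [tsum_eq_single (-m)]
    · simp
    · intro n hn
      have : ¬(-m + -n = 0) := by omega
      simp [this]
  · intro n
    exact ((fourier (-m)).continuous.mul
      (continuous_const.mul (fourier (-n)).continuous)).aestronglyMeasurable
  · have hcalc : ∀ n : ℤ, (∫⁻ t : AddCircle (2 * π),
        ‖fourier (-m) t * (α n * fourier (-n) t)‖₊ ∂haarAddCircle) = (‖α n‖₊ : ENNReal) := by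
      intro n
      have : ∀ t : AddCircle (2 * π),
          (‖fourier (-m) t * (α n * fourier (-n) t)‖₊ : ENNReal) = (‖α n‖₊ : ENNReal) := by
        intro t
        congr 1
        ext
        simp [norm_fourier_apply, Circle.norm_coe]
      simp_rw [this]
      rw [lintegral_const, measure_univ, mul_one]
    simp_rw [enorm_eq_nnnorm, hcalc]
    rw [← ENNReal.coe_tsum]
    · exact ENNReal.coe_ne_top
    · exact NNReal.summable_coe.mp (hl1.congr fun n => (coe_nnnorm (α n)).symm)

lemma parsevalC (f : AddCircle (2 * π) → ℂ) (hf : Continuous f) :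
    ∑' i : ℤ, ‖fourierCoeff f i‖ ^ 2
      = ∫ t : AddCircle (2 * π), ‖f t‖ ^ 2 ∂haarAddCircle := by
  set F : C(AddCircle (2 * π), ℂ) := ⟨f, hf⟩ with hFdef
  have hcoe : ⇑F = f := rfl
  have h := tsum_sq_fourierCoeff (ContinuousMap.toLp (E := ℂ) 2 haarAddCircle ℂ F)
  have h1 : ∀ i : ℤ, fourierCoeff (⇑(ContinuousMap.toLp (E := ℂ) 2 haarAddCircle ℂ F)) i
      = fourierCoeff f i := fun i => by rw [fourierCoeff_toLp F i, hcoe]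
  have h2 : (∫ t : AddCircle (2 * π),
      ‖(ContinuousMap.toLp (E := ℂ) 2 haarAddCircle ℂ F) t‖ ^ 2 ∂haarAddCircle)
      = ∫ t : AddCircle (2 * π), ‖f t‖ ^ 2 ∂haarAddCircle := by
    apply integral_congr_ae
    filter_upwards [ContinuousMap.coeFn_toLp (p := 2) haarAddCircle (𝕜 := ℂ) F] with t ht
    rw [ht, hcoe]
  rw [← h2, ← h]
  exact tsum_congr fun i => by rw [h1]

lemma integrable_sq_norm (f : AddCircle (2 * π) → ℂ) (hf : Continuous f) :
    Integrable (fun t => ‖f t‖ ^ 2) (haarAddCircle (T := 2 * π)) := by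
  apply Continuous.integrable_of_hasCompactSupport
  · exact hf.norm.pow 2
  · exact HasCompactSupport.of_compactSpace _

lemma fourier_exp_eq (n : ℤ) (θ : ℝ) :
    fourier (-n) ((θ : ℝ) : AddCircle (2 * π)) = Complex.exp (-Complex.I * n * θ) := by
  rw [fourier_coe_apply]
  congr 1
  have hπ : (π : ℂ) ≠ 0 := Complex.ofReal_ne_zero.mpr Real.pi_ne_zero
  push_cast
  field_simp

lemma phase_eq (θ : ℝ) :
    fourier 1 ((θ : ℝ) : AddCircle (2 * π)) - fourier (-1) ((θ : ℝ) : AddCircle (2 * π))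
      = ((2 * Real.sin θ : ℝ) : ℂ) * Complex.I := by
  have hπ : (π : ℂ) ≠ 0 := Complex.ofReal_ne_zero.mpr Real.pi_ne_zero
  have e1 : fourier 1 ((θ : ℝ) : AddCircle (2 * π)) = Complex.exp ((θ : ℂ) * Complex.I) := by
    rw [fourier_coe_apply]
    congr 1
    push_cast
    field_simp
  have e2 : fourier (-1) ((θ : ℝ) : AddCircle (2 * π))
      = Complex.exp ((-θ : ℂ) * Complex.I) := by
    rw [fourier_coe_apply]
    congr 1
    push_cast
    field_simp
  rw [e1, e2, Complex.exp_mul_I, Complex.exp_mul_I]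
  simp only [Complex.cos_neg, Complex.sin_neg]
  push_cast [Complex.ofReal_sin]
  ring

lemma phase_norm (θ : ℝ) :
    ‖fourier 1 ((θ : ℝ) : AddCircle (2 * π)) - fourier (-1) ((θ : ℝ) : AddCircle (2 * π))‖
      = 2 * |Real.sin θ| := by
  rw [phase_eq, norm_mul, Complex.norm_I, mul_one, Complex.norm_real]
  rw [Real.norm_eq_abs, abs_mul]
  norm_num
/-- If `α ∈ ℓ²(ℤ)` (with absolutely convergent Fourier series, so that its
discrete Fourier transform `α̂(θ) = ∑_n α_n e^{-inθ}` is defined pointwise) has `α̂` supported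
(mod `2π`) in `{|θ| ≤ κh} ∪ {|θ - π| ≤ κh}` with `κh ≤ π/4`, then
`‖α_{·+1} - α_{·-1}‖_{ℓ²} ≤ 2κh ‖α‖_{ℓ²}`. -/
theorem stmt12 (κ h : ℝ) (hκ : 0 < κ) (hh : 0 < h) (hκh : κ * h ≤ π / 4)
    (α : ℤ → ℂ) (hl1 : Summable fun n : ℤ => ‖α n‖)
    (hl2 : Summable fun n : ℤ => ‖α n‖ ^ 2)
    (hsupp : ∀ θ ∈ Set.Ico (-(π / 2)) (3 * π / 2),
      ¬(|θ| ≤ κ * h ∨ |θ - π| ≤ κ * h) →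
        (∑' n : ℤ, α n * Complex.exp (-Complex.I * n * θ)) = 0) :
    Real.sqrt (∑' n : ℤ, ‖α (n + 1) - α (n - 1)‖ ^ 2)
      ≤ 2 * κ * h * Real.sqrt (∑' n : ℤ, ‖α n‖ ^ 2) := by
  classical
  set β : ℤ → ℂ := fun n => α (n + 1) - α (n - 1) with hβdef
  have h1 : Summable fun n : ℤ => ‖α (n + 1)‖ :=
    hl1.comp_injective (fun a b hab => by simpa using hab : Function.Injective fun n : ℤ => n + 1)
  have h2 : Summable fun n : ℤ => ‖α (n - 1)‖ :=
    hl1.comp_injective (fun a b hab => by simpa using hab : Function.Injective fun n : ℤ => n - 1)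
  have hβ1 : Summable fun n : ℤ => ‖β n‖ :=
    Summable.of_nonneg_of_le (fun n => norm_nonneg _) (fun n => norm_sub_le _ _) (h1.add h2)
  set F : AddCircle (2 * π) → ℂ := fun x => ∑' n : ℤ, α n * fourier (-n) x with hFdef
  set G : AddCircle (2 * π) → ℂ := fun x => ∑' n : ℤ, β n * fourier (-n) x with hGdef
  have hFc : Continuous F := contF α hl1
  have hGc : Continuous G := contF β hβ1
  -- G = (fourier 1 - fourier (-1)) * F
  have hGF : ∀ x, G x = (fourier 1 x - fourier (-1) x) * F x := by
    intro x
    have hs1 : Summable fun n : ℤ => α (n + 1) * fourier (-n) x := by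
      apply Summable.of_norm
      apply h1.congr
      intro n
      rw [norm_mul, norm_fourier_apply, mul_one]
    have hs2 : Summable fun n : ℤ => α (n - 1) * fourier (-n) x := by
      apply Summable.of_norm
      apply h2.congr
      intro n
      rw [norm_mul, norm_fourier_apply, mul_one]
    have e1 : (∑' n : ℤ, α (n + 1) * fourier (-n) x) = F x * fourier 1 x := by
      rw [hFdef]
      rw [← (Equiv.subRight (1 : ℤ)).tsum_eq (fun n => α (n + 1) * fourier (-n) x)]
      rw [← tsum_mul_right]
      apply tsum_congr
      intro n
      have hn : (Equiv.subRight (1 : ℤ)) n = n - 1 := rfl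
      rw [hn, sub_add_cancel]
      have hm : -(n - 1) = -n + 1 := by ring
      rw [hm, fourier_add]
      ring
    have e2 : (∑' n : ℤ, α (n - 1) * fourier (-n) x) = F x * fourier (-1) x := by
      rw [hFdef]
      rw [← (Equiv.addRight (1 : ℤ)).tsum_eq (fun n => α (n - 1) * fourier (-n) x)]
      rw [← tsum_mul_right]
      apply tsum_congr
      intro n
      have hn : (Equiv.addRight (1 : ℤ)) n = n + 1 := rfl
      rw [hn, add_sub_cancel_right]
      have hm : -(n + 1) = -n + -1 := by ring
      rw [hm, fourier_add]
      ring
    have : G x = (∑' n : ℤ, α (n + 1) * fourier (-n) x)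
        - ∑' n : ℤ, α (n - 1) * fourier (-n) x := by
      rw [hGdef, ← Summable.tsum_sub hs1 hs2]
      apply tsum_congr
      intro n
      rw [hβdef]
      ring
    rw [this, e1, e2]
    ring
  -- pointwise bound
  have hkh0 : (0 : ℝ) < κ * h := mul_pos hκ hh
  have hpt : ∀ x : AddCircle (2 * π), ‖G x‖ ≤ 2 * (κ * h) * ‖F x‖ := by
    intro x
    induction x using QuotientAddGroup.induction_on with
    | H y =>
    set θ : ℝ := toIcoMod Real.two_pi_pos (-(π / 2)) y with hθdef
    have hmem : θ ∈ Set.Ico (-(π / 2)) (-(π / 2) + 2 * π) :=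
      toIcoMod_mem_Ico Real.two_pi_pos (-(π / 2)) y
    have hx : ((y : ℝ) : AddCircle (2 * π)) = ((θ : ℝ) : AddCircle (2 * π)) := by
      apply (QuotientAddGroup.eq_iff_sub_mem).mpr
      rw [hθdef, self_sub_toIcoMod]
      exact AddSubgroup.zsmul_mem_zmultiples _ _
    have hmem' : θ ∈ Set.Ico (-(π / 2)) (3 * π / 2) := by
      have : -(π / 2) + 2 * π = 3 * π / 2 := by ring
      rwa [this] at hmem
    have hFθ : F ((θ : ℝ) : AddCircle (2 * π))
        = ∑' n : ℤ, α n * Complex.exp (-Complex.I * n * θ) := by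
      rw [hFdef]
      exact tsum_congr fun n => by rw [fourier_exp_eq]
    rw [hx, hGF]
    by_cases hsc : |θ| ≤ κ * h ∨ |θ - π| ≤ κ * h
    · have hsin : |Real.sin θ| ≤ κ * h := by
        rcases hsc with hc | hc
        · exact Real.abs_sin_le_abs.trans hc
        · have : |Real.sin θ| = |Real.sin (θ - π)| := by
            rw [Real.sin_sub_pi, abs_neg]
          rw [this]
          exact Real.abs_sin_le_abs.trans hc
      rw [norm_mul]
      apply mul_le_mul_of_nonneg_right _ (norm_nonneg _)
      rw [phase_norm]
      linarith
    · have hF0 : F ((θ : ℝ) : AddCircle (2 * π)) = 0 := by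
        rw [hFθ]
        exact hsupp θ hmem' hsc
      rw [hF0, mul_zero, norm_zero]
      positivity
  -- Parseval identities
  have hPA : (∑' n : ℤ, ‖α n‖ ^ 2)
      = ∫ t : AddCircle (2 * π), ‖F t‖ ^ 2 ∂haarAddCircle := by
    rw [← parsevalC F hFc, ← (Equiv.neg ℤ).tsum_eq (fun n => ‖α n‖ ^ 2)]
    apply tsum_congr
    intro m
    rw [hFdef, coeffF α hl1 m]
    rfl
  have hPB : (∑' n : ℤ, ‖β n‖ ^ 2)
      = ∫ t : AddCircle (2 * π), ‖G t‖ ^ 2 ∂haarAddCircle := by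
    rw [← parsevalC G hGc, ← (Equiv.neg ℤ).tsum_eq (fun n => ‖β n‖ ^ 2)]
    apply tsum_congr
    intro m
    rw [hGdef, coeffF β hβ1 m]
    rfl
  -- integral bound
  have hint : (∫ t : AddCircle (2 * π), ‖G t‖ ^ 2 ∂haarAddCircle)
      ≤ (2 * (κ * h)) ^ 2 * ∫ t : AddCircle (2 * π), ‖F t‖ ^ 2 ∂haarAddCircle := by
    rw [← integral_const_mul]
    apply integral_mono (integrable_sq_norm G hGc)
      ((integrable_sq_norm F hFc).const_mul _)
    intro t
    calc ‖G t‖ ^ 2 ≤ (2 * (κ * h) * ‖F t‖) ^ 2 := by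
          apply pow_le_pow_left₀ (norm_nonneg _) (hpt t)
      _ = (2 * (κ * h)) ^ 2 * ‖F t‖ ^ 2 := by ring
  have hfinal : (∑' n : ℤ, ‖β n‖ ^ 2) ≤ (2 * (κ * h)) ^ 2 * ∑' n : ℤ, ‖α n‖ ^ 2 := by
    rw [hPB, hPA]
    exact hint
  have hgoal : (∑' n : ℤ, ‖α (n + 1) - α (n - 1)‖ ^ 2) = ∑' n : ℤ, ‖β n‖ ^ 2 := rfl
  rw [hgoal]
  calc Real.sqrt (∑' n : ℤ, ‖β n‖ ^ 2)
      ≤ Real.sqrt ((2 * (κ * h)) ^ 2 * ∑' n : ℤ, ‖α n‖ ^ 2) := Real.sqrt_le_sqrt hfinal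
    _ = 2 * κ * h * Real.sqrt (∑' n : ℤ, ‖α n‖ ^ 2) := by
        rw [Real.sqrt_mul (sq_nonneg _), Real.sqrt_sq (by positivity)]
        ring
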